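/- arXiv:2310.19805 — 6 statements merged into one kernel-verified Lean document; each statement's English description precedes it below -/
import Mathlib

section
/- (Soft Policy Evaluation, Lemma 1) The soft Bellman operator T^π has a unique fixed point Q^π : S × A → ℝ, and for every initial Q⁰ : S × A → ℝ the iterates Q^{k+1} = T^π Q^k satisfy max over (s,a) of |Q^k(s,a) − Q^π(s,a)| ≤ γ^k · (max over (s,a) of |Q⁰(s,a) − Q^π(s,a)|); in particular Q^k(s,a) converges to Q^π(s,a) as k → ∞ for every (s,a). -/
open Real Finset Filter

variable {S A : Type*}

/-- The soft Bellman operator `T^pol` of `(r, p, γ, pol)`. -/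
noncomputable def softBellman [Fintype S] [Fintype A]
    (r : S × A → ℝ) (p : S × A → S → ℝ) (γ : ℝ) (pol : S → A → ℝ)
    (Q : S × A → ℝ) : S × A → ℝ :=
  fun sa => r sa + γ * ∑ s' : S, p sa s' *
    ∑ a' : A, (pol s' a' * Q (s', a') + Real.negMulLog (pol s' a'))

lemma sup_eq_dist [Fintype S] [Fintype A] [Nonempty S] [Nonempty A]
    (f g : S × A → ℝ) : (⨆ sa : S × A, |f sa - g sa|) = dist f g := by
  apply le_antisymm
  · exact ciSup_le fun sa => by
      simpa [Real.dist_eq] using dist_le_pi_dist f g sa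
  · rw [dist_pi_le_iff]
    · intro sa
      rw [Real.dist_eq]
      exact le_ciSup (f := fun sa : S × A => |f sa - g sa|) (Finite.bddAbove_range _) sa
    · exact le_ciSup_of_le (Finite.bddAbove_range _) (Classical.arbitrary _) (abs_nonneg _)

lemma bellman_lip [Fintype S] [Fintype A] [Nonempty S] [Nonempty A]
    (p : S × A → S → ℝ) (hp0 : ∀ sa s', 0 ≤ p sa s') (hp1 : ∀ sa, ∑ s' : S, p sa s' = 1)
    (pol : S → A → ℝ) (hpol0 : ∀ s a, 0 ≤ pol s a) (hpol1 : ∀ s, ∑ a : A, pol s a = 1)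
    (r : S × A → ℝ) (γ : ℝ) (hγ0 : 0 ≤ γ)
    (Q1 Q2 : S × A → ℝ) :
    dist (softBellman r p γ pol Q1) (softBellman r p γ pol Q2) ≤ γ * dist Q1 Q2 := by
  have hD : 0 ≤ dist Q1 Q2 := dist_nonneg
  rw [dist_pi_le_iff (by positivity)]
  intro sa
  rw [Real.dist_eq]
  have key : softBellman r p γ pol Q1 sa - softBellman r p γ pol Q2 sa =
      γ * ∑ s' : S, p sa s' * ∑ a' : A, pol s' a' * (Q1 (s', a') - Q2 (s', a')) := by
    simp only [softBellman]
    rw [add_sub_add_left_eq_sub, ← mul_sub, ← Finset.sum_sub_distrib]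
    congr 1
    refine Finset.sum_congr rfl fun s' _ => ?_
    rw [← mul_sub, ← Finset.sum_sub_distrib]
    congr 1
    exact Finset.sum_congr rfl fun a' _ => by ring
  rw [key, abs_mul, abs_of_nonneg hγ0]
  gcongr
  calc |∑ s' : S, p sa s' * ∑ a' : A, pol s' a' * (Q1 (s', a') - Q2 (s', a'))|
      ≤ ∑ s' : S, |p sa s' * ∑ a' : A, pol s' a' * (Q1 (s', a') - Q2 (s', a'))| :=
        Finset.abs_sum_le_sum_abs _ _
    _ ≤ ∑ s' : S, p sa s' * dist Q1 Q2 := by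
        apply Finset.sum_le_sum
        intro s' _
        rw [abs_mul, abs_of_nonneg (hp0 sa s')]
        gcongr
        · exact hp0 sa s'
        calc |∑ a' : A, pol s' a' * (Q1 (s', a') - Q2 (s', a'))|
            ≤ ∑ a' : A, |pol s' a' * (Q1 (s', a') - Q2 (s', a'))| :=
              Finset.abs_sum_le_sum_abs _ _
          _ ≤ ∑ a' : A, pol s' a' * dist Q1 Q2 := by
              apply Finset.sum_le_sum
              intro a' _
              rw [abs_mul, abs_of_nonneg (hpol0 s' a')]
              gcongr
              · exact hpol0 s' a'
              · simpa [Real.dist_eq] using dist_le_pi_dist Q1 Q2 (s', a')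
          _ = dist Q1 Q2 := by rw [← Finset.sum_mul, hpol1 s', one_mul]
    _ = dist Q1 Q2 := by rw [← Finset.sum_mul, hp1 sa, one_mul]

/-- Soft Policy Evaluation (Lemma 1): the soft Bellman operator has a unique fixed point,
the iterates converge to it geometrically fast, and in particular pointwise. -/
theorem soft_policy_evaluation
    [Fintype S] [Fintype A] [Nonempty S] [Nonempty A]
    (p : S × A → S → ℝ) (hp0 : ∀ sa s', 0 ≤ p sa s') (hp1 : ∀ sa, ∑ s' : S, p sa s' = 1)
    (pol : S → A → ℝ) (hpol0 : ∀ s a, 0 ≤ pol s a) (hpol1 : ∀ s, ∑ a : A, pol s a = 1)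
    (r : S × A → ℝ) (γ : ℝ) (hγ0 : 0 ≤ γ) (hγ1 : γ < 1) :
    ∃ Qpol : S × A → ℝ,
      softBellman r p γ pol Qpol = Qpol ∧
      (∀ Q' : S × A → ℝ, softBellman r p γ pol Q' = Q' → Q' = Qpol) ∧
      (∀ Q0 : S × A → ℝ, ∀ k : ℕ,
        (⨆ sa : S × A, |(softBellman r p γ pol)^[k] Q0 sa - Qpol sa|) ≤
          γ ^ k * ⨆ sa : S × A, |Q0 sa - Qpol sa|) ∧
      (∀ Q0 : S × A → ℝ, ∀ sa : S × A,
        Tendsto (fun k => (softBellman r p γ pol)^[k] Q0 sa) atTop (nhds (Qpol sa))) := by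
  set T := softBellman r p γ pol with hT
  have hLip : LipschitzWith γ.toNNReal T :=
    LipschitzWith.of_dist_le_mul fun Q1 Q2 => by
      rw [Real.coe_toNNReal γ hγ0]
      exact bellman_lip p hp0 hp1 pol hpol0 hpol1 r γ hγ0 Q1 Q2
  have hK : γ.toNNReal < 1 := by
    rw [← Real.toNNReal_one]
    exact (Real.toNNReal_lt_toNNReal_iff one_pos).2 hγ1
  have hC : ContractingWith γ.toNNReal T := ⟨hK, hLip⟩
  have hfix : ∀ k, T^[k] (hC.fixedPoint T) = hC.fixedPoint T :=
    fun k => hC.fixedPoint_isFixedPt.iterate k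
  have hgeo : ∀ Q0 : S × A → ℝ, ∀ k : ℕ,
      dist (T^[k] Q0) (hC.fixedPoint T) ≤ γ ^ k * dist Q0 (hC.fixedPoint T) := by
    intro Q0 k
    calc dist (T^[k] Q0) (hC.fixedPoint T) = dist (T^[k] Q0) (T^[k] (hC.fixedPoint T)) := by
          rw [hfix]
      _ ≤ (γ.toNNReal ^ k : NNReal) * dist Q0 (hC.fixedPoint T) := (hLip.iterate k).dist_le_mul _ _
      _ = γ ^ k * dist Q0 (hC.fixedPoint T) := by
          push_cast [Real.coe_toNNReal γ hγ0]; ring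
  refine ⟨hC.fixedPoint T, hC.fixedPoint_isFixedPt, ?_, ?_, ?_⟩
  · intro Q' hQ'
    exact hC.fixedPoint_unique' hQ' hC.fixedPoint_isFixedPt
  · intro Q0 k
    rw [sup_eq_dist, sup_eq_dist]
    exact hgeo Q0 k
  · intro Q0 sa
    rw [tendsto_iff_dist_tendsto_zero]
    apply squeeze_zero (fun k => dist_nonneg)
      (g := fun k => γ ^ k * dist Q0 (hC.fixedPoint T))
    · intro k
      calc dist (T^[k] Q0 sa) (hC.fixedPoint T sa) ≤ dist (T^[k] Q0) (hC.fixedPoint T) :=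
            dist_le_pi_dist _ _ sa
        _ ≤ γ ^ k * dist Q0 (hC.fixedPoint T) := hgeo Q0 k
    · simpa using (tendsto_pow_atTop_nhds_zero_of_lt_one hγ0 hγ1).mul_const
        (dist Q0 (hC.fixedPoint T))
end

section
/- (Soft Policy Improvement, Lemma 2) Let π_old and π_new be policies, let Q_old be a fixed point of the soft Bellman operator T^{π_old}, and suppose that for every state s, ∑_a (π_new(s)(a)·Q_old(s,a) + negMulLog(π_new(s)(a))) ≥ ∑_a (π_old(s)(a)·Q_old(s,a) + negMulLog(π_old(s)(a))). Then the fixed point Q_new of T^{π_new} satisfies Q_new(s,a) ≥ Q_old(s,a) for all (s,a). -/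
open Real Finset Filter

variable {S A : Type*}

/-- Soft Policy Improvement (Lemma 2): if `pol_new` improves the soft value of `Q_old`
at every state, then the soft Q-function of `pol_new` dominates that of `pol_old`. -/
theorem soft_policy_improvement
    [Fintype S] [Fintype A] [Nonempty S] [Nonempty A]
    (p : S × A → S → ℝ) (hp0 : ∀ sa s', 0 ≤ p sa s') (hp1 : ∀ sa, ∑ s' : S, p sa s' = 1)
    (r : S × A → ℝ) (γ : ℝ) (hγ0 : 0 ≤ γ) (hγ1 : γ < 1)
    (polOld : S → A → ℝ) (hpolOld0 : ∀ s a, 0 ≤ polOld s a) (hpolOld1 : ∀ s, ∑ a : A, polOld s a = 1)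
    (polNew : S → A → ℝ) (hpolNew0 : ∀ s a, 0 ≤ polNew s a) (hpolNew1 : ∀ s, ∑ a : A, polNew s a = 1)
    (Qold : S × A → ℝ) (hQold : softBellman r p γ polOld Qold = Qold)
    (himp : ∀ s : S,
      ∑ a : A, (polOld s a * Qold (s, a) + Real.negMulLog (polOld s a)) ≤
        ∑ a : A, (polNew s a * Qold (s, a) + Real.negMulLog (polNew s a)))
    (Qnew : S × A → ℝ) (hQnew : softBellman r p γ polNew Qnew = Qnew) :
    ∀ sa, Qold sa ≤ Qnew sa := by
  classical
  set f : S × A → ℝ := fun sa => Qold sa - Qnew sa with hf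
  obtain ⟨sa0, -, hsa0⟩ := Finset.exists_max_image (Finset.univ : Finset (S × A)) f
    Finset.univ_nonempty
  set M := f sa0 with hM
  have hbound : ∀ sa, f sa ≤ γ * M := by
    intro sa
    have h1 : Qold sa ≤ softBellman r p γ polNew Qold sa := by
      conv_lhs => rw [← hQold]
      unfold softBellman
      exact add_le_add le_rfl (mul_le_mul_of_nonneg_left (Finset.sum_le_sum fun s' _ =>
        mul_le_mul_of_nonneg_left (himp s') (hp0 sa s')) hγ0)
    have inner : ∀ s' : S, ∑ a' : A, polNew s' a' * f (s', a') ≤ M := by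
      intro s'
      calc ∑ a' : A, polNew s' a' * f (s', a') ≤ ∑ a' : A, polNew s' a' * M := by
            apply Finset.sum_le_sum
            intro a' _
            exact mul_le_mul_of_nonneg_left (hsa0 (s', a') (Finset.mem_univ _)) (hpolNew0 s' a')
        _ = M := by rw [← Finset.sum_mul, hpolNew1 s', one_mul]
    have key : softBellman r p γ polNew Qold sa - softBellman r p γ polNew Qnew sa
        = γ * ∑ s' : S, p sa s' * ∑ a' : A, polNew s' a' * f (s', a') := by
      unfold softBellman
      rw [add_sub_add_left_eq_sub, ← mul_sub]
      congr 1
      rw [← Finset.sum_sub_distrib]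
      apply Finset.sum_congr rfl
      intro s' _
      rw [← mul_sub]
      congr 1
      rw [← Finset.sum_sub_distrib]
      apply Finset.sum_congr rfl
      intro a' _
      simp only [hf]
      ring
    have h2 : softBellman r p γ polNew Qold sa - Qnew sa ≤ γ * M := by
      conv_lhs => rw [← hQnew]
      rw [key]
      have outer : ∑ s' : S, p sa s' * ∑ a' : A, polNew s' a' * f (s', a') ≤ M := by
        calc ∑ s' : S, p sa s' * ∑ a' : A, polNew s' a' * f (s', a')
            ≤ ∑ s' : S, p sa s' * M := by
              apply Finset.sum_le_sum
              intro s' _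
              exact mul_le_mul_of_nonneg_left (inner s') (hp0 sa s')
          _ = M := by rw [← Finset.sum_mul, hp1 sa, one_mul]
      exact mul_le_mul_of_nonneg_left outer hγ0
    simp only [hf]
    linarith
  have hM0 : M ≤ 0 := by
    have := hbound sa0
    rw [← hM] at this
    nlinarith
  intro sa
  have h1 : f sa ≤ M := hsa0 sa (Finset.mem_univ _)
  simp only [hf] at h1
  linarith
end

section
/- (Softmax policy improvement step) Let π_old be a policy and Q_old a fixed point of the soft Bellman operator T^{π_old}. Define π_new(s)(a) = exp(Q_old(s,a)) / ∑_{a'} exp(Q_old(s,a')). Then π_new is a policy, and the fixed point Q_new of T^{π_new} satisfies Q_new(s,a) ≥ Q_old(s,a) for all (s,a). -/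
open Real Finset Filter

variable {S A : Type*}

private lemma sum_mul_le_of_le {ι : Type*} [Fintype ι] (w f : ι → ℝ)
    (hw0 : ∀ i, 0 ≤ w i) (hw1 : ∑ i, w i = 1) (c : ℝ) (hf : ∀ i, f i ≤ c) :
    ∑ i, w i * f i ≤ c := by
  calc ∑ i, w i * f i ≤ ∑ i, w i * c :=
        Finset.sum_le_sum fun i _ => mul_le_mul_of_nonneg_left (hf i) (hw0 i)
    _ = c := by rw [← Finset.sum_mul, hw1, one_mul]

private lemma gibbs {B : Type*} [Fintype B] [Nonempty B] (q : B → ℝ)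
    (hq0 : ∀ a, 0 ≤ q a) (hq1 : ∑ a, q a = 1) (x : B → ℝ) :
    ∑ a, (q a * x a + Real.negMulLog (q a)) ≤ Real.log (∑ a, Real.exp (x a)) := by
  set Z := ∑ a, Real.exp (x a) with hZ
  have hZpos : 0 < Z := Finset.sum_pos (fun a _ => Real.exp_pos _) Finset.univ_nonempty
  have key : ∀ a, q a * x a + Real.negMulLog (q a) - q a * Real.log Z
      ≤ Real.exp (x a) / Z - q a := by
    intro a
    rcases eq_or_lt_of_le (hq0 a) with h | h
    · rw [← h]
      simp [Real.negMulLog_zero]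
      positivity
    · have h1 : Real.log (Real.exp (x a) / (q a * Z)) ≤ Real.exp (x a) / (q a * Z) - 1 :=
        Real.log_le_sub_one_of_pos (by positivity)
      have h2 : Real.log (Real.exp (x a) / (q a * Z)) = x a - Real.log (q a) - Real.log Z := by
        rw [Real.log_div (Real.exp_ne_zero _) (by positivity),
          Real.log_mul h.ne' hZpos.ne', Real.log_exp]
        ring
      rw [h2] at h1
      have h3 := mul_le_mul_of_nonneg_left h1 (hq0 a)
      have h4 : q a * (Real.exp (x a) / (q a * Z) - 1) = Real.exp (x a) / Z - q a := by
        field_simp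
      rw [h4] at h3
      rw [Real.negMulLog]
      nlinarith [h3]
  have hsum := Finset.sum_le_sum (fun a (_ : a ∈ (Finset.univ : Finset B)) => key a)
  rw [Finset.sum_sub_distrib, Finset.sum_sub_distrib, ← Finset.sum_mul, hq1, one_mul,
    ← Finset.sum_div, ← hZ, div_self hZpos.ne'] at hsum
  linarith

private lemma softmax_sum {B : Type*} [Fintype B] [Nonempty B] (x : B → ℝ) :
    ∑ a, ((Real.exp (x a) / ∑ a', Real.exp (x a')) * x a
      + Real.negMulLog (Real.exp (x a) / ∑ a', Real.exp (x a')))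
      = Real.log (∑ a', Real.exp (x a')) := by
  set Z := ∑ a', Real.exp (x a') with hZ
  have hZpos : 0 < Z := Finset.sum_pos (fun a _ => Real.exp_pos _) Finset.univ_nonempty
  have hterm : ∀ a, (Real.exp (x a) / Z) * x a + Real.negMulLog (Real.exp (x a) / Z)
      = (Real.exp (x a) / Z) * Real.log Z := by
    intro a
    rw [Real.negMulLog, Real.log_div (Real.exp_ne_zero _) hZpos.ne', Real.log_exp]
    ring
  rw [Finset.sum_congr rfl (fun a _ => hterm a), ← Finset.sum_mul, ← Finset.sum_div, ← hZ,
    div_self hZpos.ne', one_mul]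

/-- Softmax policy improvement step: the softmax of the soft Q-function of `pol_old`
is a policy, and its soft Q-function dominates that of `pol_old`. -/
theorem softmax_policy_improvement
    [Fintype S] [Fintype A] [Nonempty S] [Nonempty A]
    (p : S × A → S → ℝ) (hp0 : ∀ sa s', 0 ≤ p sa s') (hp1 : ∀ sa, ∑ s' : S, p sa s' = 1)
    (r : S × A → ℝ) (γ : ℝ) (hγ0 : 0 ≤ γ) (hγ1 : γ < 1)
    (polOld : S → A → ℝ) (hpolOld0 : ∀ s a, 0 ≤ polOld s a) (hpolOld1 : ∀ s, ∑ a : A, polOld s a = 1)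
    (Qold : S × A → ℝ) (hQold : softBellman r p γ polOld Qold = Qold)
    (polNew : S → A → ℝ)
    (hpolNew : ∀ s a, polNew s a = Real.exp (Qold (s, a)) / ∑ a' : A, Real.exp (Qold (s, a'))) :
    (∀ s a, 0 ≤ polNew s a) ∧ (∀ s, ∑ a : A, polNew s a = 1) ∧
    ∀ Qnew : S × A → ℝ, softBellman r p γ polNew Qnew = Qnew →
      ∀ sa, Qold sa ≤ Qnew sa := by
  have hZpos : ∀ s : S, 0 < ∑ a' : A, Real.exp (Qold (s, a')) :=
    fun s => Finset.sum_pos (fun a _ => Real.exp_pos _) Finset.univ_nonempty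
  have hpolNew0 : ∀ s a, 0 ≤ polNew s a := by
    intro s a; rw [hpolNew]; positivity
  have hpolNew1 : ∀ s, ∑ a : A, polNew s a = 1 := by
    intro s
    simp_rw [hpolNew]
    rw [← Finset.sum_div, div_self (hZpos s).ne']
  refine ⟨hpolNew0, hpolNew1, ?_⟩
  intro Qnew hQnew sa
  -- Step B: Qold ≤ T^new Qold pointwise
  have hTold : ∀ sa, Qold sa ≤ softBellman r p γ polNew Qold sa := by
    intro sa
    have inner_le : ∀ s' : S,
        ∑ a' : A, (polOld s' a' * Qold (s', a') + Real.negMulLog (polOld s' a'))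
          ≤ ∑ a' : A, (polNew s' a' * Qold (s', a') + Real.negMulLog (polNew s' a')) := by
      intro s'
      calc ∑ a' : A, (polOld s' a' * Qold (s', a') + Real.negMulLog (polOld s' a'))
          ≤ Real.log (∑ a' : A, Real.exp (Qold (s', a'))) :=
            gibbs (polOld s') (hpolOld0 s') (hpolOld1 s') (fun a => Qold (s', a))
        _ = ∑ a' : A, (polNew s' a' * Qold (s', a') + Real.negMulLog (polNew s' a')) := by
            rw [← softmax_sum (fun a => Qold (s', a))]
            exact Finset.sum_congr rfl (fun a _ => by rw [hpolNew])
    conv_lhs => rw [← hQold]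
    unfold softBellman
    refine add_le_add_right (mul_le_mul_of_nonneg_left (Finset.sum_le_sum fun s' _ => ?_) hγ0) _
    exact mul_le_mul_of_nonneg_left (inner_le s') (hp0 _ _)
  -- contraction argument
  have hne : (Finset.univ : Finset (S × A)).Nonempty := Finset.univ_nonempty
  set D : S × A → ℝ := fun sa => Qold sa - Qnew sa with hD
  set M : ℝ := Finset.univ.sup' hne D with hM
  have hDM : ∀ sa, D sa ≤ M := fun sa => Finset.le_sup' D (Finset.mem_univ sa)
  have hbound : ∀ sa, D sa ≤ γ * M := by
    intro sa
    have h1 : Qold sa ≤ softBellman r p γ polNew Qold sa := hTold sa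
    have h2 : softBellman r p γ polNew Qnew sa = Qnew sa := congrFun hQnew sa
    have h3 : softBellman r p γ polNew Qold sa - softBellman r p γ polNew Qnew sa
        = γ * ∑ s' : S, p sa s' * ∑ a' : A, polNew s' a' * D (s', a') := by
      unfold softBellman
      have e : ∀ s' : S, p sa s' * ∑ a' : A, polNew s' a' * D (s', a')
          = p sa s' * (∑ a' : A, (polNew s' a' * Qold (s', a') + Real.negMulLog (polNew s' a')))
            - p sa s' * (∑ a' : A, (polNew s' a' * Qnew (s', a') + Real.negMulLog (polNew s' a'))) := by
        intro s'
        rw [← mul_sub, ← Finset.sum_sub_distrib]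
        congr 1
        exact Finset.sum_congr rfl (fun a' _ => by simp only [hD]; ring)
      rw [Finset.sum_congr rfl (fun s' (_ : s' ∈ Finset.univ) => e s'), Finset.sum_sub_distrib]
      ring
    have h4 : ∑ s' : S, p sa s' * ∑ a' : A, polNew s' a' * D (s', a') ≤ M := by
      refine sum_mul_le_of_le _ _ (hp0 sa) (hp1 sa) M (fun s' => ?_)
      exact sum_mul_le_of_le _ _ (hpolNew0 s') (hpolNew1 s') M (fun a' => hDM (s', a'))
    have h5 : γ * ∑ s' : S, p sa s' * ∑ a' : A, polNew s' a' * D (s', a') ≤ γ * M :=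
      mul_le_mul_of_nonneg_left h4 hγ0
    simp only [hD]
    linarith
  obtain ⟨sa0, _, hsa0⟩ := Finset.exists_mem_eq_sup' hne D
  have hMle : M ≤ γ * M := by
    have h := hbound sa0
    rw [← hsa0, ← hM] at h
    exact h
  have hM0 : M ≤ 0 := by nlinarith
  have := hDM sa
  simp only [hD] at this
  linarith
end

section
/- (Theorem 1, Converged Soft Policy is Optimal) Let π* be a policy and Q* a fixed point of the soft Bellman operator T^{π*} such that π*(s)(a) = exp(Q*(s,a)) / ∑_{a'} exp(Q*(s,a')) for all s, a (i.e., π* is the softmax of its own soft Q-function). Then for every policy π and every fixed point Q^π of T^π, one has Q*(s,a) ≥ Q^π(s,a) for all (s,a). -/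
open Real Finset Filter

variable {S A : Type*}

lemma gibbs_le [Fintype A] [Nonempty A] (pi : A → ℝ) (hπ0 : ∀ a, 0 ≤ pi a)
    (hπ1 : ∑ a, pi a = 1) (Q : A → ℝ) :
    ∑ a, (pi a * Q a + Real.negMulLog (pi a)) ≤ Real.log (∑ a, Real.exp (Q a)) := by
  set Z := ∑ a, Real.exp (Q a) with hZ
  have hZpos : 0 < Z := Finset.sum_pos (fun a _ => Real.exp_pos _) Finset.univ_nonempty
  have key : ∀ a, pi a * Q a + Real.negMulLog (pi a)
      ≤ Real.exp (Q a) / Z - pi a + pi a * Real.log Z := by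
    intro a
    rcases eq_or_lt_of_le (hπ0 a) with h | h
    · rw [← h]
      simp [Real.negMulLog]
      positivity
    · have ht : 0 < Real.exp (Q a) / (pi a * Z) := by positivity
      have hle := Real.log_le_sub_one_of_pos ht
      have hlog : Real.log (Real.exp (Q a) / (pi a * Z))
          = Q a - Real.log (pi a) - Real.log Z := by
        rw [Real.log_div (Real.exp_ne_zero _) (by positivity), Real.log_exp,
          Real.log_mul (ne_of_gt h) (ne_of_gt hZpos)]
        ring
      have h2 := mul_le_mul_of_nonneg_left hle (le_of_lt h)
      rw [hlog] at h2
      have h3 : pi a * (Real.exp (Q a) / (pi a * Z) - 1) = Real.exp (Q a) / Z - pi a := by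
        field_simp
      rw [h3] at h2
      unfold Real.negMulLog
      nlinarith [h2]
  calc ∑ a, (pi a * Q a + Real.negMulLog (pi a))
      ≤ ∑ a, (Real.exp (Q a) / Z - pi a + pi a * Real.log Z) :=
        Finset.sum_le_sum (fun a _ => key a)
    _ = Real.log Z := by
        rw [Finset.sum_add_distrib, Finset.sum_sub_distrib, ← Finset.sum_div,
          ← Finset.sum_mul, hπ1, ← hZ]
        field_simp
        ring

lemma gibbs_eq [Fintype A] [Nonempty A] (Q : A → ℝ) :
    ∑ a, ((Real.exp (Q a) / ∑ a' : A, Real.exp (Q a')) * Q a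
      + Real.negMulLog (Real.exp (Q a) / ∑ a' : A, Real.exp (Q a')))
    = Real.log (∑ a, Real.exp (Q a)) := by
  set Z := ∑ a : A, Real.exp (Q a) with hZ
  have hZpos : 0 < Z := Finset.sum_pos (fun a _ => Real.exp_pos _) Finset.univ_nonempty
  have key : ∀ a, (Real.exp (Q a) / Z) * Q a + Real.negMulLog (Real.exp (Q a) / Z)
      = (Real.exp (Q a) / Z) * Real.log Z := by
    intro a
    have hlog : Real.log (Real.exp (Q a) / Z) = Q a - Real.log Z := by
      rw [Real.log_div (Real.exp_ne_zero _) (ne_of_gt hZpos), Real.log_exp]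
    rw [Real.negMulLog, hlog]
    ring
  rw [Finset.sum_congr rfl (fun a _ => key a), ← Finset.sum_mul, ← Finset.sum_div, ← hZ]
  field_simp

/-- Theorem 1 (Converged Soft Policy is Optimal): if `pol*` is the softmax of its own
soft Q-function, then its soft Q-function dominates the soft Q-function of every policy. -/
theorem converged_soft_policy_optimal
    [Fintype S] [Fintype A] [Nonempty S] [Nonempty A]
    (p : S × A → S → ℝ) (hp0 : ∀ sa s', 0 ≤ p sa s') (hp1 : ∀ sa, ∑ s' : S, p sa s' = 1)
    (r : S × A → ℝ) (γ : ℝ) (hγ0 : 0 ≤ γ) (hγ1 : γ < 1)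
    (polStar : S → A → ℝ) (hpolStar0 : ∀ s a, 0 ≤ polStar s a)
    (hpolStar1 : ∀ s, ∑ a : A, polStar s a = 1)
    (Qstar : S × A → ℝ) (hQstar : softBellman r p γ polStar Qstar = Qstar)
    (hsoftmax : ∀ s a,
      polStar s a = Real.exp (Qstar (s, a)) / ∑ a' : A, Real.exp (Qstar (s, a'))) :
    ∀ pol : S → A → ℝ, (∀ s a, 0 ≤ pol s a) → (∀ s, ∑ a : A, pol s a = 1) →
      ∀ Qpol : S × A → ℝ, softBellman r p γ pol Qpol = Qpol →
        ∀ sa, Qpol sa ≤ Qstar sa := by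
  intro pol hpol0 hpol1 Qpol hQpol
  obtain ⟨sa0, -, hmax⟩ := Finset.exists_max_image Finset.univ
    (fun sa => Qpol sa - Qstar sa) ⟨Classical.arbitrary _, Finset.mem_univ _⟩
  set M := Qpol sa0 - Qstar sa0 with hM
  have hmax' : ∀ sa : S × A, Qpol sa - Qstar sa ≤ M := fun sa => hmax sa (Finset.mem_univ _)
  -- per-state inner comparison
  have hinner : ∀ s' : S,
      (∑ a' : A, (pol s' a' * Qpol (s', a') + Real.negMulLog (pol s' a')))
      - (∑ a' : A, (polStar s' a' * Qstar (s', a') + Real.negMulLog (polStar s' a'))) ≤ M := by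
    intro s'
    have hstar : (∑ a' : A, (polStar s' a' * Qstar (s', a') + Real.negMulLog (polStar s' a')))
        = Real.log (∑ a' : A, Real.exp (Qstar (s', a'))) := by
      have := gibbs_eq (fun a => Qstar (s', a))
      simp only at this
      rw [← this]
      exact Finset.sum_congr rfl (fun a _ => by rw [hsoftmax s' a])
    have hle1 : (∑ a' : A, (pol s' a' * Qstar (s', a') + Real.negMulLog (pol s' a')))
        ≤ Real.log (∑ a' : A, Real.exp (Qstar (s', a'))) :=
      gibbs_le (pol s') (hpol0 s') (hpol1 s') (fun a => Qstar (s', a))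
    have hle2 : (∑ a' : A, (pol s' a' * Qpol (s', a') + Real.negMulLog (pol s' a')))
        - (∑ a' : A, (pol s' a' * Qstar (s', a') + Real.negMulLog (pol s' a')))
        = ∑ a' : A, pol s' a' * (Qpol (s', a') - Qstar (s', a')) := by
      rw [← Finset.sum_sub_distrib]
      exact Finset.sum_congr rfl (fun a _ => by ring)
    have hle3 : ∑ a' : A, pol s' a' * (Qpol (s', a') - Qstar (s', a')) ≤ M := by
      calc ∑ a' : A, pol s' a' * (Qpol (s', a') - Qstar (s', a'))
          ≤ ∑ a' : A, pol s' a' * M :=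
            Finset.sum_le_sum (fun a _ =>
              mul_le_mul_of_nonneg_left (hmax' (s', a)) (hpol0 s' a))
        _ = M := by rw [← Finset.sum_mul, hpol1 s', one_mul]
    linarith [hstar ▸ hle1]
  have hbound : ∀ sa : S × A, Qpol sa - Qstar sa ≤ γ * M := by
    intro sa
    have e1 : Qpol sa = r sa + γ * ∑ s' : S, p sa s' *
        ∑ a' : A, (pol s' a' * Qpol (s', a') + Real.negMulLog (pol s' a')) :=
      (congrFun hQpol sa).symm
    have e2 : Qstar sa = r sa + γ * ∑ s' : S, p sa s' *
        ∑ a' : A, (polStar s' a' * Qstar (s', a') + Real.negMulLog (polStar s' a')) :=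
      (congrFun hQstar sa).symm
    have hdiff : Qpol sa - Qstar sa = γ * ∑ s' : S, p sa s' *
        ((∑ a' : A, (pol s' a' * Qpol (s', a') + Real.negMulLog (pol s' a')))
        - (∑ a' : A, (polStar s' a' * Qstar (s', a') + Real.negMulLog (polStar s' a')))) := by
      have expand : ∑ s' : S, p sa s' *
          ((∑ a' : A, (pol s' a' * Qpol (s', a') + Real.negMulLog (pol s' a')))
          - (∑ a' : A, (polStar s' a' * Qstar (s', a') + Real.negMulLog (polStar s' a'))))
          = (∑ s' : S, p sa s' * ∑ a' : A, (pol s' a' * Qpol (s', a') + Real.negMulLog (pol s' a')))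
          - ∑ s' : S, p sa s' * ∑ a' : A, (polStar s' a' * Qstar (s', a') + Real.negMulLog (polStar s' a')) := by
        rw [← Finset.sum_sub_distrib]
        exact Finset.sum_congr rfl (fun s' _ => by ring)
      rw [e1, e2, expand]
      ring
    rw [hdiff]
    have : ∑ s' : S, p sa s' * ((∑ a' : A, (pol s' a' * Qpol (s', a') + Real.negMulLog (pol s' a')))
        - (∑ a' : A, (polStar s' a' * Qstar (s', a') + Real.negMulLog (polStar s' a')))) ≤ M := by
      calc _ ≤ ∑ s' : S, p sa s' * M :=
            Finset.sum_le_sum (fun s' _ =>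
              mul_le_mul_of_nonneg_left (hinner s') (hp0 sa s'))
        _ = M := by rw [← Finset.sum_mul, hp1 sa, one_mul]
    exact mul_le_mul_of_nonneg_left this hγ0
  have hM0 : M ≤ 0 := by nlinarith [hbound sa0]
  intro sa
  linarith [hmax' sa]
end

section
/- (The soft optimality operator is a γ-contraction) For all Q₁, Q₂ : S × A → ℝ, max over (s,a) of |(T* Q₁)(s,a) − (T* Q₂)(s,a)| ≤ γ · max over (s,a) of |Q₁(s,a) − Q₂(s,a)|. -/
open Real Finset Filter

variable {S A : Type*}

/-- Log-sum-exp is 1-Lipschitz (one-sided). -/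
lemma lse_lip_aux [Fintype A] [Nonempty A] (f g : A → ℝ) (M : ℝ)
    (h : ∀ a, f a - g a ≤ M) :
    Real.log (∑ a : A, Real.exp (f a)) - Real.log (∑ a : A, Real.exp (g a)) ≤ M := by
  have hpos : (0:ℝ) < ∑ a : A, Real.exp (g a) :=
    Finset.sum_pos (fun a _ => Real.exp_pos _) Finset.univ_nonempty
  have hle : (∑ a : A, Real.exp (f a)) ≤ (∑ a : A, Real.exp (g a)) * Real.exp M := by
    rw [Finset.sum_mul]
    apply Finset.sum_le_sum
    intro a _
    rw [← Real.exp_add]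
    exact Real.exp_le_exp.mpr (by linarith [h a])
  calc Real.log (∑ a : A, Real.exp (f a)) - Real.log (∑ a : A, Real.exp (g a))
      ≤ Real.log ((∑ a : A, Real.exp (g a)) * Real.exp M)
          - Real.log (∑ a : A, Real.exp (g a)) :=
        sub_le_sub_right (Real.log_le_log (Finset.sum_pos (fun a _ => Real.exp_pos _) Finset.univ_nonempty) hle) _
    _ = M := by rw [Real.log_mul (ne_of_gt hpos) (ne_of_gt (Real.exp_pos _)), Real.log_exp]; ring

/-- The soft optimality operator `T*` of `(r, p, γ)`. -/
noncomputable def softOpt [Fintype S] [Fintype A]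
    (r : S × A → ℝ) (p : S × A → S → ℝ) (γ : ℝ)
    (Q : S × A → ℝ) : S × A → ℝ :=
  fun sa => r sa + γ * ∑ s' : S, p sa s' *
    Real.log (∑ a' : A, Real.exp (Q (s', a')))

/-- The soft optimality operator is a γ-contraction in the supremum norm. -/
theorem softOpt_contraction
    [Fintype S] [Fintype A] [Nonempty S] [Nonempty A]
    (p : S × A → S → ℝ) (hp0 : ∀ sa s', 0 ≤ p sa s') (hp1 : ∀ sa, ∑ s' : S, p sa s' = 1)
    (r : S × A → ℝ) (γ : ℝ) (hγ0 : 0 ≤ γ) (hγ1 : γ < 1)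
    (Q₁ Q₂ : S × A → ℝ) :
    (⨆ sa : S × A, |softOpt r p γ Q₁ sa - softOpt r p γ Q₂ sa|) ≤
      γ * ⨆ sa : S × A, |Q₁ sa - Q₂ sa| := by
  set M := ⨆ sa : S × A, |Q₁ sa - Q₂ sa| with hMdef
  have hbdd : BddAbove (Set.range fun sa : S × A => |Q₁ sa - Q₂ sa|) :=
    Set.Finite.bddAbove (Set.finite_range _)
  have hM : ∀ sa : S × A, |Q₁ sa - Q₂ sa| ≤ M := fun sa => le_ciSup hbdd sa
  have hlse : ∀ s' : S,
      |Real.log (∑ a' : A, Real.exp (Q₁ (s', a'))) -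
        Real.log (∑ a' : A, Real.exp (Q₂ (s', a')))| ≤ M := by
    intro s'
    rw [abs_sub_le_iff]
    constructor
    · exact lse_lip_aux _ _ M (fun a => (abs_le.mp (hM (s', a))).2)
    · exact lse_lip_aux _ _ M (fun a => by
        have := (abs_le.mp (hM (s', a))).1; linarith)
  apply ciSup_le
  intro sa
  have key : softOpt r p γ Q₁ sa - softOpt r p γ Q₂ sa =
      γ * ∑ s' : S, p sa s' *
        (Real.log (∑ a' : A, Real.exp (Q₁ (s', a'))) -
          Real.log (∑ a' : A, Real.exp (Q₂ (s', a')))) := by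
    simp only [softOpt, Finset.mul_sum, mul_sub]
    rw [Finset.sum_sub_distrib]
    ring
  rw [key, abs_mul, abs_of_nonneg hγ0]
  gcongr
  calc |∑ s' : S, p sa s' * (Real.log (∑ a' : A, Real.exp (Q₁ (s', a'))) -
          Real.log (∑ a' : A, Real.exp (Q₂ (s', a'))))|
      ≤ ∑ s' : S, |p sa s' * (Real.log (∑ a' : A, Real.exp (Q₁ (s', a'))) -
          Real.log (∑ a' : A, Real.exp (Q₂ (s', a'))))| := Finset.abs_sum_le_sum_abs _ _
    _ ≤ ∑ s' : S, p sa s' * M := by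
        apply Finset.sum_le_sum
        intro s' _
        rw [abs_mul, abs_of_nonneg (hp0 sa s')]
        exact mul_le_mul_of_nonneg_left (hlse s') (hp0 sa s')
    _ = M := by rw [← Finset.sum_mul, hp1 sa, one_mul]
end

section
/- (Theorem 1, convergence of repeated soft policy improvement) Suppose |r(s,a)| ≤ R for all (s,a). Let (π_i) be a sequence of policies and for each i let Q_i be the fixed point of the soft Bellman operator T^{π_i}, and suppose π_{i+1}(s)(a) = exp(Q_i(s,a)) / ∑_{a'} exp(Q_i(s,a')) for every i, s, a. Then for every (s,a) the sequence (Q_i(s,a)) is nondecreasing in i and bounded above by (R + γ·log(card A))/(1 − γ), and hence converges as i → ∞. -/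
open Real Finset Filter

variable {S A : Type*}

lemma my_gibbs [Fintype A] [Nonempty A] (w f : A → ℝ)
    (hw0 : ∀ a, 0 ≤ w a) (hw1 : ∑ a, w a = 1) :
    ∑ a, (w a * f a + Real.negMulLog (w a)) ≤ Real.log (∑ a, Real.exp (f a)) := by
  set Z := ∑ a, Real.exp (f a) with hZ
  have hZpos : 0 < Z := Finset.sum_pos (fun a _ => Real.exp_pos _) Finset.univ_nonempty
  have key : ∀ a, w a * f a + Real.negMulLog (w a) - w a * Real.log Z
      ≤ Real.exp (f a) / Z - w a := by
    intro a
    rcases eq_or_lt_of_le (hw0 a) with h | h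
    · rw [← h]
      simp [Real.negMulLog]
      positivity
    · have hx : 0 < Real.exp (f a) / (w a * Z) := by positivity
      have hlog := Real.log_le_sub_one_of_pos hx
      have hlogeq : Real.log (Real.exp (f a) / (w a * Z))
          = f a - Real.log (w a) - Real.log Z := by
        rw [Real.log_div (Real.exp_ne_zero _) (by positivity), Real.log_exp,
          Real.log_mul (ne_of_gt h) (ne_of_gt hZpos)]
        ring
      have h2 := mul_le_mul_of_nonneg_left hlog (le_of_lt h)
      rw [hlogeq] at h2
      have hR : w a * (Real.exp (f a) / (w a * Z) - 1) = Real.exp (f a) / Z - w a := by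
        field_simp
      have hL : w a * (f a - Real.log (w a) - Real.log Z)
          = w a * f a + Real.negMulLog (w a) - w a * Real.log Z := by
        simp [Real.negMulLog]; ring
      linarith [h2, hR.le, hR.ge, hL.le, hL.ge]
  have hsum := Finset.sum_le_sum (fun a (_ : a ∈ Finset.univ) => key a)
  have h1 : ∑ a, (w a * f a + Real.negMulLog (w a) - w a * Real.log Z)
      = (∑ a, (w a * f a + Real.negMulLog (w a))) - Real.log Z := by
    rw [Finset.sum_sub_distrib, ← Finset.sum_mul, hw1, one_mul]
  have h2 : ∑ a, (Real.exp (f a) / Z - w a) = 0 := by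
    rw [Finset.sum_sub_distrib, hw1, ← Finset.sum_div, ← hZ, div_self (ne_of_gt hZpos)]
    ring
  rw [h1, h2] at hsum
  linarith

lemma my_softmax_sum [Fintype A] [Nonempty A] (f : A → ℝ) :
    ∑ a, ((Real.exp (f a) / ∑ a' : A, Real.exp (f a')) * f a
      + Real.negMulLog (Real.exp (f a) / ∑ a' : A, Real.exp (f a')))
      = Real.log (∑ a' : A, Real.exp (f a')) := by
  set Z := ∑ a' : A, Real.exp (f a') with hZ
  have hZpos : 0 < Z := Finset.sum_pos (fun a _ => Real.exp_pos _) Finset.univ_nonempty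
  have hterm : ∀ a, (Real.exp (f a) / Z) * f a + Real.negMulLog (Real.exp (f a) / Z)
      = (Real.exp (f a) / Z) * Real.log Z := by
    intro a
    have : Real.log (Real.exp (f a) / Z) = f a - Real.log Z := by
      rw [Real.log_div (Real.exp_ne_zero _) (ne_of_gt hZpos), Real.log_exp]
    simp [Real.negMulLog, this]
    ring
  calc ∑ a, ((Real.exp (f a) / Z) * f a + Real.negMulLog (Real.exp (f a) / Z))
      = ∑ a, (Real.exp (f a) / Z) * Real.log Z := by
        exact Finset.sum_congr rfl (fun a _ => hterm a)
    _ = (∑ a, Real.exp (f a) / Z) * Real.log Z := by rw [Finset.sum_mul]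
    _ = Real.log Z := by
        rw [← Finset.sum_div, ← hZ, div_self (ne_of_gt hZpos), one_mul]

/-- Theorem 1 (convergence of repeated soft policy improvement): along softmax policy
iteration, the soft Q-values are pointwise nondecreasing and bounded above by
`(R + γ log |A|)/(1 - γ)`, hence convergent. -/
theorem soft_policy_iteration_converges
    [Fintype S] [Fintype A] [Nonempty S] [Nonempty A]
    (p : S × A → S → ℝ) (hp0 : ∀ sa s', 0 ≤ p sa s') (hp1 : ∀ sa, ∑ s' : S, p sa s' = 1)
    (r : S × A → ℝ) (γ : ℝ) (hγ0 : 0 ≤ γ) (hγ1 : γ < 1)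
    (R : ℝ) (hr : ∀ sa, |r sa| ≤ R)
    (pol : ℕ → S → A → ℝ)
    (hpol0 : ∀ i s a, 0 ≤ pol i s a) (hpol1 : ∀ i s, ∑ a : A, pol i s a = 1)
    (Q : ℕ → S × A → ℝ)
    (hQ : ∀ i, softBellman r p γ (pol i) (Q i) = Q i)
    (hstep : ∀ i s a,
      pol (i + 1) s a = Real.exp (Q i (s, a)) / ∑ a' : A, Real.exp (Q i (s, a'))) :
    ∀ sa : S × A,
      Monotone (fun i => Q i sa) ∧
      (∀ i, Q i sa ≤ (R + γ * Real.log (Fintype.card A)) / (1 - γ)) ∧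
      ∃ L : ℝ, Tendsto (fun i => Q i sa) atTop (nhds L) := by
  have hQeq : ∀ i sa, Q i sa = r sa + γ * ∑ s' : S, p sa s' *
      ∑ a' : A, (pol i s' a' * Q i (s', a') + Real.negMulLog (pol i s' a')) := by
    intro i sa
    conv_lhs => rw [← hQ i]
    rfl
  have hcard : (1 : ℝ) ≤ Fintype.card A := by exact_mod_cast Fintype.card_pos
  -- upper bound
  have hbound : ∀ i sa, Q i sa ≤ (R + γ * Real.log (Fintype.card A)) / (1 - γ) := by
    intro i sa
    obtain ⟨sa₀, hmax⟩ := Finite.exists_max (Q i)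
    have inner_le : ∀ s' : S,
        ∑ a' : A, (pol i s' a' * Q i (s', a') + Real.negMulLog (pol i s' a'))
          ≤ Q i sa₀ + Real.log (Fintype.card A) := by
      intro s'
      have h1 := my_gibbs (pol i s') (fun a => Q i (s', a)) (hpol0 i s') (hpol1 i s')
      have hZpos : 0 < ∑ a : A, Real.exp (Q i (s', a)) :=
        Finset.sum_pos (fun a _ => Real.exp_pos _) Finset.univ_nonempty
      have h2 : ∑ a : A, Real.exp (Q i (s', a))
          ≤ (Fintype.card A : ℝ) * Real.exp (Q i sa₀) := by
        calc ∑ a : A, Real.exp (Q i (s', a)) ≤ ∑ _a : A, Real.exp (Q i sa₀) :=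
              Finset.sum_le_sum (fun a _ => Real.exp_le_exp.2 (hmax (s', a)))
          _ = (Fintype.card A : ℝ) * Real.exp (Q i sa₀) := by
              simp [Finset.sum_const, Finset.card_univ, nsmul_eq_mul]
      have h3 : Real.log (∑ a : A, Real.exp (Q i (s', a)))
          ≤ Q i sa₀ + Real.log (Fintype.card A) := by
        have := Real.log_le_log hZpos h2
        rw [Real.log_mul (by positivity) (Real.exp_ne_zero _), Real.log_exp] at this
        linarith
      exact le_trans h1 h3
    have hM : Q i sa₀ ≤ R + γ * (Q i sa₀ + Real.log (Fintype.card A)) := by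
      have heq := hQeq i sa₀
      have hsum : ∑ s' : S, p sa₀ s' *
          (∑ a' : A, (pol i s' a' * Q i (s', a') + Real.negMulLog (pol i s' a')))
          ≤ Q i sa₀ + Real.log (Fintype.card A) := by
        calc _ ≤ ∑ s' : S, p sa₀ s' * (Q i sa₀ + Real.log (Fintype.card A)) :=
              Finset.sum_le_sum (fun s' _ =>
                mul_le_mul_of_nonneg_left (inner_le s') (hp0 sa₀ s'))
          _ = Q i sa₀ + Real.log (Fintype.card A) := by
              rw [← Finset.sum_mul, hp1, one_mul]
      have hrle : r sa₀ ≤ R := (abs_le.1 (hr sa₀)).2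
      nlinarith [hsum, mul_le_mul_of_nonneg_left hsum hγ0]
    have hM' : Q i sa₀ ≤ (R + γ * Real.log (Fintype.card A)) / (1 - γ) := by
      rw [le_div_iff₀ (by linarith)]
      nlinarith
    exact le_trans (hmax sa) hM'
  -- monotonicity
  have hmono : ∀ i sa, Q i sa ≤ Q (i + 1) sa := by
    intro i sa
    obtain ⟨sa₀, hmin⟩ := Finite.exists_min (fun sa => Q (i + 1) sa - Q i sa)
    set m := Q (i + 1) sa₀ - Q i sa₀ with hm
    have key : ∀ s' : S,
        (∑ a' : A, (pol i s' a' * Q i (s', a') + Real.negMulLog (pol i s' a'))) + m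
          ≤ ∑ a' : A, (pol (i+1) s' a' * Q (i+1) (s', a')
              + Real.negMulLog (pol (i+1) s' a')) := by
      intro s'
      have g1 := my_gibbs (pol i s') (fun a => Q i (s', a)) (hpol0 i s') (hpol1 i s')
      have g2 : ∑ a' : A, (pol (i+1) s' a' * Q i (s', a')
            + Real.negMulLog (pol (i+1) s' a'))
          = Real.log (∑ a' : A, Real.exp (Q i (s', a'))) := by
        rw [← my_softmax_sum (fun a => Q i (s', a))]
        exact Finset.sum_congr rfl (fun a _ => by rw [hstep i s' a])
      have g3 : ∑ a' : A, (pol (i+1) s' a' * Q (i+1) (s', a')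
              + Real.negMulLog (pol (i+1) s' a'))
            - ∑ a' : A, (pol (i+1) s' a' * Q i (s', a')
              + Real.negMulLog (pol (i+1) s' a'))
          = ∑ a' : A, pol (i+1) s' a' * (Q (i+1) (s', a') - Q i (s', a')) := by
        rw [← Finset.sum_sub_distrib]
        exact Finset.sum_congr rfl (fun a _ => by ring)
      have g4 : m ≤ ∑ a' : A, pol (i+1) s' a' * (Q (i+1) (s', a') - Q i (s', a')) := by
        calc m = ∑ a' : A, pol (i+1) s' a' * m := by
              rw [← Finset.sum_mul, hpol1, one_mul]
          _ ≤ _ := Finset.sum_le_sum (fun a _ =>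
              mul_le_mul_of_nonneg_left (hmin (s', a)) (hpol0 (i+1) s' a))
      linarith
    have hdiff : γ * m ≤ m := by
      have h1 := hQeq i sa₀
      have h2 := hQeq (i+1) sa₀
      have hsum : (∑ s' : S, p sa₀ s' *
            (∑ a' : A, (pol i s' a' * Q i (s', a') + Real.negMulLog (pol i s' a'))))
            + m
          ≤ ∑ s' : S, p sa₀ s' *
            (∑ a' : A, (pol (i+1) s' a' * Q (i+1) (s', a')
              + Real.negMulLog (pol (i+1) s' a'))) := by
        have : ∀ s' : S, p sa₀ s' *
            ((∑ a' : A, (pol i s' a' * Q i (s', a') + Real.negMulLog (pol i s' a'))) + m)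
            ≤ p sa₀ s' * (∑ a' : A, (pol (i+1) s' a' * Q (i+1) (s', a')
              + Real.negMulLog (pol (i+1) s' a'))) :=
          fun s' => mul_le_mul_of_nonneg_left (key s') (hp0 sa₀ s')
        have hsum2 := Finset.sum_le_sum (fun s' (_ : s' ∈ Finset.univ) => this s')
        have hexp : ∑ s' : S, p sa₀ s' *
            ((∑ a' : A, (pol i s' a' * Q i (s', a') + Real.negMulLog (pol i s' a'))) + m)
            = (∑ s' : S, p sa₀ s' *
              (∑ a' : A, (pol i s' a' * Q i (s', a') + Real.negMulLog (pol i s' a'))))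
              + m := by
          rw [Finset.sum_congr rfl (fun s' _ => mul_add (p sa₀ s') _ m),
            Finset.sum_add_distrib, ← Finset.sum_mul, hp1, one_mul]
        rw [hexp] at hsum2
        exact hsum2
      have : m ≥ γ * m := by nlinarith [hsum, h1, h2]
      linarith
    have hm0 : 0 ≤ m := by nlinarith
    have := hmin sa
    have this : m ≤ Q (i + 1) sa - Q i sa := this
    linarith
  intro sa
  have mono : Monotone fun i => Q i sa := monotone_nat_of_le_succ (fun i => hmono i sa)
  refine ⟨mono, fun i => hbound i sa, ?_⟩
  refine ⟨⨆ i, Q i sa, tendsto_atTop_ciSup mono ?_⟩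
  exact ⟨(R + γ * Real.log (Fintype.card A)) / (1 - γ), by
    rintro x ⟨i, rfl⟩; exact hbound i sa⟩
end
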